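/- Let 𝒮 and 𝒯 be the F-algebra antiautomorphisms of the Racah algebra ℜ with 𝒮: A ↦ B, B ↦ A, C ↦ C, D ↦ D and 𝒯: A ↦ B, B ↦ C, C ↦ A. Then 𝒮(Ω_A) = Ω_B, 𝒮(Ω_B) = Ω_A, 𝒮(Ω_C) = Ω_C, 𝒯(Ω_A) = Ω_B, 𝒯(Ω_B) = Ω_C, and 𝒯(Ω_C) = Ω_A; in particular the set {Ω_A, Ω_B, Ω_C} is invariant under 𝒮 and 𝒯. -/

import Mathlib

noncomputable section

/-- Generators of the Racah algebra. -/
inductive RGen : Type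
  | A | B | C | D

namespace Racah

variable (F : Type) [Field F]

/-- The free algebra on the generators `A`, `B`, `C`, `D`. -/
abbrev FA := FreeAlgebra F RGen

def fA : FA F := FreeAlgebra.ι F RGen.A
def fB : FA F := FreeAlgebra.ι F RGen.B
def fC : FA F := FreeAlgebra.ι F RGen.C
def fD : FA F := FreeAlgebra.ι F RGen.D

/-- α = [A,D] + AC − BA in the free algebra. -/
def fAl : FA F := (fA F * fD F - fD F * fA F) + fA F * fC F - fB F * fA F
/-- β = [B,D] + BA − CB in the free algebra. -/
def fBe : FA F := (fB F * fD F - fD F * fB F) + fB F * fA F - fC F * fB F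
/-- γ = [C,D] + CB − AC in the free algebra. -/
def fGa : FA F := (fC F * fD F - fD F * fC F) + fC F * fB F - fA F * fC F

/-- The defining relations of the Racah algebra:
`[A,B] = [B,C] = [C,A] = 2D` and each of `α`, `β`, `γ` commutes with each of `A`, `B`, `C`, `D`. -/
inductive Rel : FA F → FA F → Prop
  | AB : Rel (fA F * fB F - fB F * fA F) (2 * fD F)
  | BC : Rel (fB F * fC F - fC F * fB F) (2 * fD F)
  | CA : Rel (fC F * fA F - fA F * fC F) (2 * fD F)
  | cen (c x : FA F) (hc : c = fAl F ∨ c = fBe F ∨ c = fGa F)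
      (hx : x = fA F ∨ x = fB F ∨ x = fC F ∨ x = fD F) :
      Rel (c * x) (x * c)

/-- The Racah algebra ℜ. -/
abbrev R := RingQuot (Rel F)

def A : R F := RingQuot.mkAlgHom F (Rel F) (fA F)
def B : R F := RingQuot.mkAlgHom F (Rel F) (fB F)
def C : R F := RingQuot.mkAlgHom F (Rel F) (fC F)
def D : R F := RingQuot.mkAlgHom F (Rel F) (fD F)

/-- α = [A,D] + AC − BA. -/
def al : R F := (A F * D F - D F * A F) + A F * C F - B F * A F
/-- β = [B,D] + BA − CB. -/
def be : R F := (B F * D F - D F * B F) + B F * A F - C F * B F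
/-- γ = [C,D] + CB − AC. -/
def ga : R F := (C F * D F - D F * C F) + C F * B F - A F * C F
/-- δ = A + B + C. -/
def de : R F := A F + B F + C F

end Racah

namespace Racah

/-- An F-algebra antiautomorphism of ℜ: an F-linear bijection `f` with `f 1 = 1`
and `f (x*y) = f y * f x` for all `x`, `y`. -/
def IsAntiAut (F : Type) [Field F] (f : R F ≃ₗ[F] R F) : Prop :=
  f 1 = 1 ∧ ∀ x y : R F, f (x * y) = f y * f x

end Racah

namespace Racah

variable (F : Type) [Field F]

/-- Ω_A = D² + (BAC + CAB)/2 + A² + Bγ − Cβ − Aδ. -/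
def OmA : R F := D F ^ 2 + (2 : F)⁻¹ • (B F * A F * C F + C F * A F * B F) + A F ^ 2
  + B F * ga F - C F * be F - A F * de F

/-- Ω_B = D² + (CBA + ABC)/2 + B² + Cα − Aγ − Bδ. -/
def OmB : R F := D F ^ 2 + (2 : F)⁻¹ • (C F * B F * A F + A F * B F * C F) + B F ^ 2
  + C F * al F - A F * ga F - B F * de F

/-- Ω_C = D² + (ACB + BCA)/2 + C² + Aβ − Bα − Cδ. -/
def OmC : R F := D F ^ 2 + (2 : F)⁻¹ • (A F * C F * B F + B F * C F * A F) + C F ^ 2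
  + A F * be F - B F * al F - C F * de F

end Racah

namespace Racah
variable (F : Type) [Field F]

lemma rAB : A F * B F - B F * A F = 2 * D F := by
  simpa only [map_sub, map_mul, map_ofNat, A, B, C, D] using RingQuot.mkAlgHom_rel F (Rel.AB (F := F))

lemma rBC : B F * C F - C F * B F = 2 * D F := by
  simpa only [map_sub, map_mul, map_ofNat, A, B, C, D] using RingQuot.mkAlgHom_rel F (Rel.BC (F := F))

lemma rCA : C F * A F - A F * C F = 2 * D F := by
  simpa only [map_sub, map_mul, map_ofNat, A, B, C, D] using RingQuot.mkAlgHom_rel F (Rel.CA (F := F))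

lemma mk_fAl : RingQuot.mkAlgHom F (Rel F) (fAl F) = al F := by
  simp only [fAl, al, A, B, C, D, map_sub, map_add, map_mul]

lemma mk_fBe : RingQuot.mkAlgHom F (Rel F) (fBe F) = be F := by
  simp only [fBe, be, A, B, C, D, map_sub, map_add, map_mul]

lemma mk_fGa : RingQuot.mkAlgHom F (Rel F) (fGa F) = ga F := by
  simp only [fGa, ga, A, B, C, D, map_sub, map_add, map_mul]

lemma comm_al_B : al F * B F = B F * al F := by
  simpa only [map_mul, mk_fAl, B] using
    RingQuot.mkAlgHom_rel F (Rel.cen (fAl F) (fB F) (Or.inl rfl) (Or.inr (Or.inl rfl)))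

lemma comm_al_C : al F * C F = C F * al F := by
  simpa only [map_mul, mk_fAl, C] using
    RingQuot.mkAlgHom_rel F (Rel.cen (fAl F) (fC F) (Or.inl rfl) (Or.inr (Or.inr (Or.inl rfl))))

lemma comm_be_A : be F * A F = A F * be F := by
  simpa only [map_mul, mk_fBe, A] using
    RingQuot.mkAlgHom_rel F (Rel.cen (fBe F) (fA F) (Or.inr (Or.inl rfl)) (Or.inl rfl))

lemma comm_be_C : be F * C F = C F * be F := by
  simpa only [map_mul, mk_fBe, C] using
    RingQuot.mkAlgHom_rel F (Rel.cen (fBe F) (fC F) (Or.inr (Or.inl rfl)) (Or.inr (Or.inr (Or.inl rfl))))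

lemma comm_ga_A : ga F * A F = A F * ga F := by
  simpa only [map_mul, mk_fGa, A] using
    RingQuot.mkAlgHom_rel F (Rel.cen (fGa F) (fA F) (Or.inr (Or.inr rfl)) (Or.inl rfl))

lemma comm_ga_B : ga F * B F = B F * ga F := by
  simpa only [map_mul, mk_fGa, B] using
    RingQuot.mkAlgHom_rel F (Rel.cen (fGa F) (fB F) (Or.inr (Or.inr rfl)) (Or.inr (Or.inl rfl)))

lemma hAB : A F * B F = B F * A F + 2 * D F := by
  have := rAB F; linear_combination (norm := noncomm_ring) this

lemma hBC : B F * C F = C F * B F + 2 * D F := by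
  have := rBC F; linear_combination (norm := noncomm_ring) this

lemma hCA : C F * A F = A F * C F + 2 * D F := by
  have := rCA F; linear_combination (norm := noncomm_ring) this

end Racah

namespace Racah
variable (F : Type) [Field F]

lemma comm_de_A : de F * A F = A F * de F := by
  have h1 := rAB F; have h2 := rCA F; unfold de
  linear_combination (norm := noncomm_ring) h2 - h1

lemma comm_de_B : de F * B F = B F * de F := by
  have h1 := rAB F; have h2 := rBC F; unfold de
  linear_combination (norm := noncomm_ring) h1 - h2

lemma comm_de_C : de F * C F = C F * de F := by
  have h1 := rBC F; have h2 := rCA F; unfold de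
  linear_combination (norm := noncomm_ring) h1 - h2

lemma Rneg_mul (x y : R F) : -x * y = -(x * y) := neg_mul x y
lemma Rmul_neg (x y : R F) : x * -y = -(x * y) := mul_neg x y
lemma Rneg_neg (x : R F) : - -x = x := neg_neg x
lemma Rsub_neg (x y : R F) : x - -y = x + y := sub_neg_eq_add x y

end Racah


open Racah in
/-- 𝒮(Ω_A) = Ω_B, 𝒮(Ω_B) = Ω_A, 𝒮(Ω_C) = Ω_C, 𝒯(Ω_A) = Ω_B, 𝒯(Ω_B) = Ω_C,
𝒯(Ω_C) = Ω_A; in particular {Ω_A, Ω_B, Ω_C} is invariant under 𝒮 and 𝒯. -/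
theorem stmt7 (F : Type) [Field F] (h2 : (2 : F) ≠ 0)
    (S T : Racah.R F ≃ₗ[F] Racah.R F)
    (hS : IsAntiAut F S ∧ S (Racah.A F) = Racah.B F ∧ S (Racah.B F) = Racah.A F ∧
      S (Racah.C F) = Racah.C F ∧ S (Racah.D F) = Racah.D F)
    (hT : IsAntiAut F T ∧ T (Racah.A F) = Racah.B F ∧ T (Racah.B F) = Racah.C F ∧
      T (Racah.C F) = Racah.A F) :
    S (OmA F) = OmB F ∧ S (OmB F) = OmA F ∧ S (OmC F) = OmC F ∧
    T (OmA F) = OmB F ∧ T (OmB F) = OmC F ∧ T (OmC F) = OmA F ∧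
    S '' {OmA F, OmB F, OmC F} = {OmA F, OmB F, OmC F} ∧
    T '' {OmA F, OmB F, OmC F} = {OmA F, OmB F, OmC F} := by
  obtain ⟨⟨-, hSm⟩, hSA, hSB, hSC, hSD⟩ := hS
  obtain ⟨⟨-, hTm⟩, hTA, hTB, hTC⟩ := hT
  have hTD : T (Racah.D F) = -(Racah.D F) := by
    have key : T (Racah.D F) + T (Racah.D F) = -(Racah.D F) - Racah.D F := by
      have h1 : T (Racah.A F * Racah.B F - Racah.B F * Racah.A F) = T (2 * Racah.D F) := by
        rw [rAB]
      rw [map_sub, hTm, hTm, hTA, hTB, two_mul, map_add] at h1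
      have h3 := rBC F
      linear_combination (norm := noncomm_ring) -h1 - h3
    have h4 : (2 : F) • (T (Racah.D F) + Racah.D F) = 0 := by
      rw [two_smul]
      calc (T (Racah.D F) + Racah.D F) + (T (Racah.D F) + Racah.D F)
          = (T (Racah.D F) + T (Racah.D F)) + (Racah.D F + Racah.D F) := by abel
        _ = 0 := by rw [key]; abel
    have h5 := congrArg (fun z => (2 : F)⁻¹ • z) h4
    simp only [inv_smul_smul₀ h2, smul_zero] at h5
    linear_combination (norm := noncomm_ring) h5
  have hSal : S (al F) = -(be F) := by
    simp only [al, be, map_sub, map_add, hSm, hSA, hSB, hSC, hSD]; noncomm_ring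
  have hSbe : S (be F) = -(al F) := by
    simp only [al, be, map_sub, map_add, hSm, hSA, hSB, hSC, hSD]; noncomm_ring
  have hSga : S (ga F) = -(ga F) := by
    simp only [ga, map_sub, map_add, hSm, hSA, hSB, hSC, hSD]; noncomm_ring
  have hSde : S (de F) = de F := by
    simp only [de, map_add, hSA, hSB, hSC]; abel
  have hTal : T (al F) = be F := by
    simp only [al, be, map_sub, map_add, hTm, hTA, hTB, hTC, hTD,
      Rneg_mul, Rmul_neg, Rneg_neg, Rsub_neg, hAB, hBC]
    abel
  have hTbe : T (be F) = ga F := by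
    simp only [be, ga, map_sub, map_add, hTm, hTA, hTB, hTC, hTD,
      Rneg_mul, Rmul_neg, Rneg_neg, Rsub_neg, hBC, hCA]
    abel
  have hTga : T (ga F) = al F := by
    simp only [ga, al, map_sub, map_add, hTm, hTA, hTB, hTC, hTD,
      Rneg_mul, Rmul_neg, Rneg_neg, Rsub_neg, hCA, hAB]
    abel
  have hTde : T (de F) = de F := by
    simp only [de, map_add, hTA, hTB, hTC]; abel
  have e1 : S (OmA F) = OmB F := by
    simp only [OmA, OmB, pow_two, map_add, map_sub, map_smul, hSm, hSA, hSB, hSC, hSD,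
      hSal, hSbe, hSga, hSde, Rneg_mul, Rmul_neg, Rneg_neg, Rsub_neg,
      comm_al_B, comm_al_C, comm_be_A, comm_be_C, comm_ga_A, comm_ga_B,
      comm_de_A, comm_de_B, comm_de_C, mul_assoc]
    abel
  have e2 : S (OmB F) = OmA F := by
    simp only [OmA, OmB, pow_two, map_add, map_sub, map_smul, hSm, hSA, hSB, hSC, hSD,
      hSal, hSbe, hSga, hSde, Rneg_mul, Rmul_neg, Rneg_neg, Rsub_neg,
      comm_al_B, comm_al_C, comm_be_A, comm_be_C, comm_ga_A, comm_ga_B,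
      comm_de_A, comm_de_B, comm_de_C, mul_assoc]
    abel
  have e3 : S (OmC F) = OmC F := by
    simp only [OmC, pow_two, map_add, map_sub, map_smul, hSm, hSA, hSB, hSC, hSD,
      hSal, hSbe, hSga, hSde, Rneg_mul, Rmul_neg, Rneg_neg, Rsub_neg,
      comm_al_B, comm_al_C, comm_be_A, comm_be_C, comm_ga_A, comm_ga_B,
      comm_de_A, comm_de_B, comm_de_C, mul_assoc]
    abel
  have f1 : T (OmA F) = OmB F := by
    simp only [OmA, OmB, pow_two, map_add, map_sub, map_smul, hTm, hTA, hTB, hTC, hTD,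
      hTal, hTbe, hTga, hTde, Rneg_mul, Rmul_neg, Rneg_neg, Rsub_neg,
      comm_al_B, comm_al_C, comm_be_A, comm_be_C, comm_ga_A, comm_ga_B,
      comm_de_A, comm_de_B, comm_de_C, mul_assoc]
    abel
  have f2 : T (OmB F) = OmC F := by
    simp only [OmB, OmC, pow_two, map_add, map_sub, map_smul, hTm, hTA, hTB, hTC, hTD,
      hTal, hTbe, hTga, hTde, Rneg_mul, Rmul_neg, Rneg_neg, Rsub_neg,
      comm_al_B, comm_al_C, comm_be_A, comm_be_C, comm_ga_A, comm_ga_B,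
      comm_de_A, comm_de_B, comm_de_C, mul_assoc]
    abel
  have f3 : T (OmC F) = OmA F := by
    simp only [OmA, OmC, pow_two, map_add, map_sub, map_smul, hTm, hTA, hTB, hTC, hTD,
      hTal, hTbe, hTga, hTde, Rneg_mul, Rmul_neg, Rneg_neg, Rsub_neg,
      comm_al_B, comm_al_C, comm_be_A, comm_be_C, comm_ga_A, comm_ga_B,
      comm_de_A, comm_de_B, comm_de_C, mul_assoc]
    abel
  refine ⟨e1, e2, e3, f1, f2, f3, ?_, ?_⟩
  · rw [Set.image_insert_eq, Set.image_insert_eq, Set.image_singleton, e1, e2, e3]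
    ext x; simp only [Set.mem_insert_iff, Set.mem_singleton_iff]; tauto
  · rw [Set.image_insert_eq, Set.image_insert_eq, Set.image_singleton, f1, f2, f3]
    ext x; simp only [Set.mem_insert_iff, Set.mem_singleton_iff]; tauto
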